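/- arXiv:2510.14735 — 2 statements merged into one kernel-verified Lean document; each statement's English description precedes it below -/
import Mathlib

section
/- For any two unit quaternions p₁, p₂ ∈ Sp(1), there exists a quaternion q with q² = -1 such that q p₁ q⁻¹ = p₁⁻¹ and q p₂ q⁻¹ = p₂⁻¹. -/
open Quaternion
open scoped RealInnerProductSpace

lemma myNormSq (q : Quaternion ℝ) (hn : ‖q‖ = 1) :
    q.re^2 + q.imI^2 + q.imJ^2 + q.imK^2 = 1 := by
  have : Quaternion.normSq q = 1 := by
    rw [Quaternion.normSq_eq_norm_mul_self, hn]; norm_num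
  rw [Quaternion.normSq_def'] at this
  nlinarith [this]

lemma sq_neg_one (q : Quaternion ℝ) (h0 : q.re = 0) (hn : ‖q‖ = 1) : q * q = -1 := by
  have hns := myNormSq q hn
  rw [h0] at hns
  ext <;> simp [Quaternion.re_mul, Quaternion.imI_mul, Quaternion.imJ_mul, Quaternion.imK_mul, h0] <;> nlinarith [hns]

lemma conj_inv' (p q : Quaternion ℝ) (hp : ‖p‖ = 1) (h0 : q.re = 0) (hn : ‖q‖ = 1)
    (horth : (p * star q).re = 0) : q * p * q⁻¹ = p⁻¹ := by
  have hq2 := sq_neg_one q h0 hn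
  have hqinv : q⁻¹ = -q := by
    apply inv_eq_of_mul_eq_one_right
    rw [mul_neg, hq2]; norm_num
  have hpns : Quaternion.normSq p = 1 := by
    rw [Quaternion.normSq_eq_norm_mul_self, hp]; norm_num
  have hpinv : p⁻¹ = star p := by
    apply inv_eq_of_mul_eq_one_right
    rw [Quaternion.self_mul_star, hpns]; norm_num
  have hns := myNormSq q hn
  rw [h0] at hns
  have horth' : p.imI * q.imI + p.imJ * q.imJ + p.imK * q.imK = 0 := by
    simp [Quaternion.re_mul, h0] at horth
    linarith [horth]
  rw [hqinv, hpinv]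
  ext
  · simp only [Quaternion.re_mul, Quaternion.imI_mul, Quaternion.imJ_mul, Quaternion.imK_mul,
      Quaternion.re_neg, Quaternion.imI_neg, Quaternion.imJ_neg, Quaternion.imK_neg,
      Quaternion.re_star, h0]
    linear_combination p.re * hns
  · simp only [Quaternion.re_mul, Quaternion.imI_mul, Quaternion.imJ_mul, Quaternion.imK_mul,
      Quaternion.re_neg, Quaternion.imI_neg, Quaternion.imJ_neg, Quaternion.imK_neg,
      Quaternion.imI_star, h0]
    linear_combination (2*q.imI) * horth' - p.imI * hns
  · simp only [Quaternion.re_mul, Quaternion.imI_mul, Quaternion.imJ_mul, Quaternion.imK_mul,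
      Quaternion.re_neg, Quaternion.imI_neg, Quaternion.imJ_neg, Quaternion.imK_neg,
      Quaternion.imJ_star, h0]
    linear_combination (2*q.imJ) * horth' - p.imJ * hns
  · simp only [Quaternion.re_mul, Quaternion.imI_mul, Quaternion.imJ_mul, Quaternion.imK_mul,
      Quaternion.re_neg, Quaternion.imI_neg, Quaternion.imJ_neg, Quaternion.imK_neg,
      Quaternion.imK_star, h0]
    linear_combination (2*q.imK) * horth' - p.imK * hns

theorem stmt_8 (p₁ p₂ : Quaternion ℝ) (h₁ : ‖p₁‖ = 1) (h₂ : ‖p₂‖ = 1) :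
    ∃ q : Quaternion ℝ, q * q = -1 ∧ q * p₁ * q⁻¹ = p₁⁻¹ ∧ q * p₂ * q⁻¹ = p₂⁻¹ := by
  classical
  set K : Submodule ℝ (Quaternion ℝ) := Submodule.span ℝ {1, p₁, p₂} with hK
  have hKne : K ≠ ⊤ := by
    have hlt : K < ⊤ := by
      apply span_lt_top_of_card_lt_finrank
      have h4 : Module.finrank ℝ (Quaternion ℝ) = 4 := Quaternion.finrank_eq_four
      have hcard : ({1, p₁, p₂} : Set (Quaternion ℝ)).toFinset.card ≤ 3 := by
        rw [Set.toFinset_insert, Set.toFinset_insert, Set.toFinset_singleton]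
        calc _ ≤ ({p₁, p₂} : Finset (Quaternion ℝ)).card + 1 := Finset.card_insert_le _ _
          _ ≤ _ := by
            have := Finset.card_insert_le p₁ ({p₂} : Finset (Quaternion ℝ))
            simp at this ⊢; omega
      omega
    exact hlt.ne
  have hbot : Kᗮ ≠ ⊥ := by
    intro h
    exact hKne (Submodule.orthogonal_eq_bot_iff.mp h)
  obtain ⟨q₀, hq₀K, hq₀ne⟩ := Submodule.exists_mem_ne_zero_of_ne_bot hbot
  have horth : ∀ u ∈ K, inner (𝕜 := ℝ) u q₀ = 0 := fun u hu =>
    (Submodule.mem_orthogonal K q₀).mp hq₀K u hu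
  have h1K : (1 : Quaternion ℝ) ∈ K := Submodule.subset_span (by simp)
  have hp₁K : p₁ ∈ K := Submodule.subset_span (by simp)
  have hp₂K : p₂ ∈ K := Submodule.subset_span (by simp)
  set q : Quaternion ℝ := (‖q₀‖⁻¹ : ℝ) • q₀ with hq
  have hnq₀ : ‖q₀‖ ≠ 0 := norm_ne_zero_iff.mpr hq₀ne
  have hqn : ‖q‖ = 1 := by
    rw [hq, norm_smul]
    simp [abs_of_nonneg, inv_mul_cancel₀ hnq₀]
  have hre : q.re = 0 := by
    have := horth 1 h1K
    rw [Quaternion.inner_def] at this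
    simp at this
    simp [hq, this]
  have key : ∀ p : Quaternion ℝ, p ∈ K → (p * star q).re = 0 := by
    intro p hp
    have h0 : (p * star q₀).re = 0 := by
      rw [← Quaternion.inner_def]; exact horth p hp
    rw [hq]
    have : star ((‖q₀‖⁻¹ : ℝ) • q₀) = (‖q₀‖⁻¹ : ℝ) • star q₀ := star_smul _ _
    rw [this, mul_smul_comm, Quaternion.re_smul, h0, smul_zero]
  exact ⟨q, sq_neg_one q hre hqn, conj_inv' p₁ q h₁ hre hqn (key p₁ hp₁K),
    conj_inv' p₂ q h₂ hre hqn (key p₂ hp₂K)⟩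
end

section
/- Every pair of elements in SO(4) is strongly doubly reversible: for any A, B ∈ SO(4), there exists C ∈ SO(4) with C² = 1 such that C A C⁻¹ = A⁻¹ and C B C⁻¹ = B⁻¹. -/
theorem mul_fin_four {α} [NonUnitalNonAssocSemiring α] (A B : Matrix (Fin 4) (Fin 4) α) :
    A * B = Matrix.of fun i j => A i 0 * B 0 j + A i 1 * B 1 j + A i 2 * B 2 j + A i 3 * B 3 j := by
  ext i j
  simp [Matrix.mul_apply, Fin.sum_univ_four]

theorem det_fin_four (A : Matrix (Fin 4) (Fin 4) ℝ) :
    A.det =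
      A 0 0 * (A 1 1 * (A 2 2 * A 3 3 - A 2 3 * A 3 2) - A 1 2 * (A 2 1 * A 3 3 - A 2 3 * A 3 1) + A 1 3 * (A 2 1 * A 3 2 - A 2 2 * A 3 1))
    - A 0 1 * (A 1 0 * (A 2 2 * A 3 3 - A 2 3 * A 3 2) - A 1 2 * (A 2 0 * A 3 3 - A 2 3 * A 3 0) + A 1 3 * (A 2 0 * A 3 2 - A 2 2 * A 3 0))
    + A 0 2 * (A 1 0 * (A 2 1 * A 3 3 - A 2 3 * A 3 1) - A 1 1 * (A 2 0 * A 3 3 - A 2 3 * A 3 0) + A 1 3 * (A 2 0 * A 3 1 - A 2 1 * A 3 0))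
    - A 0 3 * (A 1 0 * (A 2 1 * A 3 2 - A 2 2 * A 3 1) - A 1 1 * (A 2 0 * A 3 2 - A 2 2 * A 3 0) + A 1 2 * (A 2 0 * A 3 1 - A 2 1 * A 3 0)) := by
  rw [Matrix.det_succ_row_zero]
  simp [Fin.sum_univ_four, Matrix.det_fin_three, Matrix.submatrix, Fin.succAbove]
  ring

noncomputable def Lm (a b c d : ℝ) : Matrix (Fin 4) (Fin 4) ℝ :=
  !![a,-b,-c,-d; b,a,-d,c; c,d,a,-b; d,-c,b,a]

noncomputable def Rm (a b c d : ℝ) : Matrix (Fin 4) (Fin 4) ℝ :=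
  !![a,-b,-c,-d; b,a,d,-c; c,-d,a,b; d,c,-b,a]

theorem Lm_mul (a b c d a' b' c' d' : ℝ) :
    Lm a b c d * Lm a' b' c' d' =
      Lm (a*a'-b*b'-c*c'-d*d') (a*b'+b*a'+c*d'-d*c') (a*c'-b*d'+c*a'+d*b') (a*d'+b*c'-c*b'+d*a') := by
  rw [mul_fin_four]
  ext i j
  fin_cases i <;> fin_cases j <;> simp [Lm] <;> ring

theorem Rm_mul (a b c d a' b' c' d' : ℝ) :
    Rm a b c d * Rm a' b' c' d' =
      Rm (a'*a-b'*b-c'*c-d'*d) (a'*b+b'*a+c'*d-d'*c) (a'*c-b'*d+c'*a+d'*b) (a'*d+b'*c-c'*b+d'*a) := by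
  rw [mul_fin_four]
  ext i j
  fin_cases i <;> fin_cases j <;> simp [Rm] <;> ring

theorem Lm_Rm_comm (a b c d a' b' c' d' : ℝ) :
    Lm a b c d * Rm a' b' c' d' = Rm a' b' c' d' * Lm a b c d := by
  rw [mul_fin_four, mul_fin_four]
  ext i j
  fin_cases i <;> fin_cases j <;> simp [Lm, Rm] <;> ring

theorem Lm_transpose (a b c d : ℝ) : (Lm a b c d).transpose = Lm a (-b) (-c) (-d) := by
  ext i j
  fin_cases i <;> fin_cases j <;> simp [Lm, Matrix.vecHead, Matrix.vecTail]

theorem Rm_transpose (a b c d : ℝ) : (Rm a b c d).transpose = Rm a (-b) (-c) (-d) := by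
  ext i j
  fin_cases i <;> fin_cases j <;> simp [Rm, Matrix.vecHead, Matrix.vecTail]

theorem Lm_one : Lm 1 0 0 0 = 1 := by
  ext i j
  fin_cases i <;> fin_cases j <;> simp [Lm, Matrix.one_apply, Matrix.vecHead, Matrix.vecTail]

theorem Rm_one : Rm 1 0 0 0 = 1 := by
  ext i j
  fin_cases i <;> fin_cases j <;> simp [Rm, Matrix.one_apply, Matrix.vecHead, Matrix.vecTail]

theorem Lm_neg_one : Lm (-1) 0 0 0 = -1 := by
  ext i j
  fin_cases i <;> fin_cases j <;> simp [Lm, Matrix.one_apply, Matrix.vecHead, Matrix.vecTail]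

theorem Rm_neg_one : Rm (-1) 0 0 0 = -1 := by
  ext i j
  fin_cases i <;> fin_cases j <;> simp [Rm, Matrix.one_apply, Matrix.vecHead, Matrix.vecTail]

theorem Lm_det (a b c d : ℝ) : (Lm a b c d).det = (a^2+b^2+c^2+d^2)^2 := by
  rw [det_fin_four]
  simp [Lm]
  ring

theorem Rm_det (a b c d : ℝ) : (Rm a b c d).det = (a^2+b^2+c^2+d^2)^2 := by
  rw [det_fin_four]
  simp [Rm]
  ring

theorem Lm_unit (a b c d : ℝ) (h : a^2+b^2+c^2+d^2 = 1) :
    (Lm a b c d).transpose * Lm a b c d = 1 := by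
  rw [Lm_transpose, Lm_mul,
    (by linear_combination h : a*a - -b*b - -c*c - -d*d = (1:ℝ)),
    (by ring : a*b + -b*a + -c*d - -d*c = (0:ℝ)),
    (by ring : a*c - -b*d + -c*a + -d*b = (0:ℝ)),
    (by ring : a*d + -b*c - -c*b + -d*a = (0:ℝ)), Lm_one]

theorem Rm_unit (a b c d : ℝ) (h : a^2+b^2+c^2+d^2 = 1) :
    (Rm a b c d).transpose * Rm a b c d = 1 := by
  rw [Rm_transpose, Rm_mul,
    (by linear_combination h : a*a - b*-b - c*-c - d*-d = (1:ℝ)),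
    (by ring : a*-b + b*a + c*-d - d*-c = (0:ℝ)),
    (by ring : a*-c - b*-d + c*a + d*-b = (0:ℝ)),
    (by ring : a*-d + b*-c - c*-b + d*a = (0:ℝ)), Rm_one]

theorem Lm_mul_star (a b c d : ℝ) (h : a^2+b^2+c^2+d^2 = 1) :
    Lm a b c d * Lm a (-b) (-c) (-d) = 1 := by
  rw [Lm_mul,
    (by linear_combination h : a*a - b*-b - c*-c - d*-d = (1:ℝ)),
    (by ring : a*-b + b*a + c*-d - d*-c = (0:ℝ)),
    (by ring : a*-c - b*-d + c*a + d*-b = (0:ℝ)),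
    (by ring : a*-d + b*-c - c*-b + d*a = (0:ℝ)), Lm_one]

theorem Rm_mul_star (a b c d : ℝ) (h : a^2+b^2+c^2+d^2 = 1) :
    Rm a b c d * Rm a (-b) (-c) (-d) = 1 := by
  rw [Rm_mul,
    (by linear_combination h : a*a - -b*b - -c*c - -d*d = (1:ℝ)),
    (by ring : a*b + -b*a + -c*d - -d*c = (0:ℝ)),
    (by ring : a*c - -b*d + -c*a + -d*b = (0:ℝ)),
    (by ring : a*d + -b*c - -c*b + -d*a = (0:ℝ)), Rm_one]

noncomputable def Cm (a b c d : ℝ) : Matrix (Fin 4) (Fin 4) ℝ :=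
  !![1,0,0,0;
     0, a^2+b^2-c^2-d^2, 2*(b*c-a*d), 2*(b*d+a*c);
     0, 2*(b*c+a*d), a^2-b^2+c^2-d^2, 2*(c*d-a*b);
     0, 2*(b*d-a*c), 2*(c*d+a*b), a^2-b^2-c^2+d^2]

theorem Lm_mul_Rm_conj (a b c d : ℝ) (h : a^2+b^2+c^2+d^2 = 1) :
    Lm a b c d * Rm a (-b) (-c) (-d) = Cm a b c d := by
  rw [mul_fin_four]
  ext i j
  fin_cases i <;> fin_cases j <;>
    simp [Lm, Rm, Cm, Matrix.vecHead, Matrix.vecTail] <;>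
    first
      | linear_combination h
      | linear_combination (0:ℝ)

theorem fin3val : ((3:Fin 4):ℕ) = 3 := rfl
theorem fin2val : ((2:Fin 4):ℕ) = 2 := rfl
theorem fin1val : ((1:Fin 4):ℕ) = 1 := rfl


theorem span_le_one (v : EuclideanSpace ℝ (Fin 3)) : Module.finrank ℝ (ℝ ∙ v) ≤ 1 := by
  rcases eq_or_ne v 0 with h | h
  · rw [h, Submodule.span_zero_singleton]
    simp
  · rw [finrank_span_singleton h]

theorem perp3 (x1 x2 x3 y1 y2 y3 : ℝ) :
    ∃ u1 u2 u3 : ℝ, u1^2+u2^2+u3^2 = 1 ∧ u1*x1+u2*x2+u3*x3 = 0 ∧ u1*y1+u2*y2+u3*y3 = 0 := by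
  set x : EuclideanSpace ℝ (Fin 3) := WithLp.toLp 2 ![x1, x2, x3] with hx
  set y : EuclideanSpace ℝ (Fin 3) := WithLp.toLp 2 ![y1, y2, y3] with hy
  set K : Submodule ℝ (EuclideanSpace ℝ (Fin 3)) := (ℝ ∙ x) ⊔ (ℝ ∙ y) with hK
  have hrank : Module.finrank ℝ K ≤ 2 := by
    rw [hK]
    have := Submodule.finrank_add_le_finrank_add_finrank (ℝ ∙ x) (ℝ ∙ y)
    have h1 := span_le_one x
    have h2 := span_le_one y
    omega
  have horth : Kᗮ ≠ ⊥ := by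
    intro hbot
    have h1 := Submodule.finrank_add_finrank_orthogonal K
    rw [hbot] at h1
    rw [finrank_euclideanSpace, Fintype.card_fin] at h1
    simp at h1
    omega
  obtain ⟨z, hzK, hz0⟩ := Submodule.exists_mem_ne_zero_of_ne_bot horth
  have hzn : ‖z‖ ≠ 0 := norm_ne_zero_iff.mpr hz0
  have hnz : ‖z‖ ^ 2 = z 0 ^ 2 + z 1 ^ 2 + z 2 ^ 2 := by
    rw [EuclideanSpace.norm_eq, Real.sq_sqrt (by positivity)]
    simp [Fin.sum_univ_three, sq]
  have hinx : z 0 * x1 + z 1 * x2 + z 2 * x3 = 0 := by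
    have hin : inner ℝ x z = (0:ℝ) :=
      Submodule.inner_right_of_mem_orthogonal (Submodule.mem_sup_left (Submodule.mem_span_singleton_self x)) hzK
    rw [PiLp.inner_apply] at hin
    simp [Fin.sum_univ_three, hx] at hin
    linear_combination hin
  have hiny : z 0 * y1 + z 1 * y2 + z 2 * y3 = 0 := by
    have hin : inner ℝ y z = (0:ℝ) :=
      Submodule.inner_right_of_mem_orthogonal (Submodule.mem_sup_right (Submodule.mem_span_singleton_self y)) hzK
    rw [PiLp.inner_apply] at hin
    simp [Fin.sum_univ_three, hy] at hin
    linear_combination hin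
  refine ⟨‖z‖⁻¹ * z 0, ‖z‖⁻¹ * z 1, ‖z‖⁻¹ * z 2, ?_, ?_, ?_⟩
  · calc (‖z‖⁻¹ * z 0)^2 + (‖z‖⁻¹ * z 1)^2 + (‖z‖⁻¹ * z 2)^2
        = ‖z‖⁻¹^2 * (z 0^2 + z 1^2 + z 2^2) := by ring
      _ = ‖z‖⁻¹^2 * ‖z‖^2 := by rw [hnz]
      _ = 1 := by field_simp
  · calc ‖z‖⁻¹ * z 0 * x1 + ‖z‖⁻¹ * z 1 * x2 + ‖z‖⁻¹ * z 2 * x3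
        = ‖z‖⁻¹ * (z 0 * x1 + z 1 * x2 + z 2 * x3) := by ring
      _ = 0 := by rw [hinx, mul_zero]
  · calc ‖z‖⁻¹ * z 0 * y1 + ‖z‖⁻¹ * z 1 * y2 + ‖z‖⁻¹ * z 2 * y3
        = ‖z‖⁻¹ * (z 0 * y1 + z 1 * y2 + z 2 * y3) := by ring
      _ = 0 := by rw [hiny, mul_zero]

set_option maxHeartbeats 2000000 in
theorem so3_lift (m11 m12 m13 m21 m22 m23 m31 m32 m33 : ℝ)
    (hc11 : m11*m11 + m21*m21 + m31*m31 = 1)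
    (hc12 : m11*m12 + m21*m22 + m31*m32 = 0)
    (hc13 : m11*m13 + m21*m23 + m31*m33 = 0)
    (hc22 : m12*m12 + m22*m22 + m32*m32 = 1)
    (hc23 : m12*m13 + m22*m23 + m32*m33 = 0)
    (hc33 : m13*m13 + m23*m23 + m33*m33 = 1)
    (hr11 : m11*m11 + m12*m12 + m13*m13 = 1)
    (hr12 : m11*m21 + m12*m22 + m13*m23 = 0)
    (hr13 : m11*m31 + m12*m32 + m13*m33 = 0)
    (hr22 : m21*m21 + m22*m22 + m23*m23 = 1)
    (hr23 : m21*m31 + m22*m32 + m23*m33 = 0)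
    (hr33 : m31*m31 + m32*m32 + m33*m33 = 1)
    (hdet : m11*(m22*m33 - m23*m32) - m12*(m21*m33 - m23*m31) + m13*(m21*m32 - m22*m31) = 1)
    (hcof11 : m11 = (m22*m33 - m23*m32))
    (hcof12 : m12 = -(m21*m33 - m23*m31))
    (hcof13 : m13 = (m21*m32 - m22*m31))
    (hcof21 : m21 = -(m12*m33 - m13*m32))
    (hcof22 : m22 = (m11*m33 - m13*m31))
    (hcof23 : m23 = -(m11*m32 - m12*m31))
    (hcof31 : m31 = (m12*m23 - m13*m22))
    (hcof32 : m32 = -(m11*m23 - m13*m21))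
    (hcof33 : m33 = (m11*m22 - m12*m21)) :
    ∃ a b c d : ℝ, a^2+b^2+c^2+d^2 = 1 ∧
      m11 = a^2+b^2-c^2-d^2 ∧ m12 = 2*(b*c-a*d) ∧ m13 = 2*(b*d+a*c) ∧
      m21 = 2*(b*c+a*d) ∧ m22 = a^2-b^2+c^2-d^2 ∧ m23 = 2*(c*d-a*b) ∧
      m31 = 2*(b*d-a*c) ∧ m32 = 2*(c*d+a*b) ∧ m33 = a^2-b^2-c^2+d^2 := by
  by_cases h0 : 1 ≤ 1+m11+m22+m33
  · have hs : (0:ℝ) < (1+m11+m22+m33) := by linarith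
    set a : ℝ := Real.sqrt (1+m11+m22+m33) / 2 with ha_def
    set b : ℝ := (m32-m23) / (4*a) with hb_def
    set c : ℝ := (m13-m31) / (4*a) with hc_def
    set d : ℝ := (m21-m12) / (4*a) with hd_def
    have hp0 : 0 < a := by rw [ha_def]; have := Real.sqrt_pos.mpr hs; linarith
    have hp0' : a ≠ 0 := ne_of_gt hp0
    have hp2 : 4*a^2 = (1+m11+m22+m33) := by
      rw [ha_def, div_pow, Real.sq_sqrt hs.le]; ring
    have hb4 : 4*a*b = (m32-m23) := by
      rw [hb_def]; field_simp; try ring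
    have hc4 : 4*a*c = (m13-m31) := by
      rw [hc_def]; field_simp; try ring
    have hd4 : 4*a*d = (m21-m12) := by
      rw [hd_def]; field_simp; try ring
    have hne : ((4:ℝ)*(1+m11+m22+m33)) ≠ 0 := ne_of_gt (by linarith)
    refine ⟨a, b, c, d, ?_, ?_, ?_, ?_, ?_, ?_, ?_, ?_, ?_, ?_⟩
    · exact mul_left_cancel₀ hne (by linear_combination ((1) + (2)*m33 + (2)*m22)*hc11 + ((-2)*m21)*hc12 + ((-2)*m31)*hc13 + ((1) + (2)*m33)*hc22 + ((-2)*m32 + (-2)*m23)*hc23 + ((1) + (2)*m22)*hc33 + ((-2)*m33 + (-2)*m22)*hr11 + ((2)*m12)*hr12 + ((2)*m13)*hr13 + ((-2) + (2)*m33 + (2)*m22)*hcof11 + ((-2)*m21)*hcof12 + ((-2)*m31)*hcof13 + (1)*(1+m11+m22+m33)*hp2 + (1)*(-4*b*b)*hp2 + (1)*(4*a*b)*hb4 + (1)*(m32-m23)*hb4 + (1)*(-4*c*c)*hp2 + (1)*(4*a*c)*hc4 + (1)*(m13-m31)*hc4 + (1)*(-4*d*d)*hp2 + (1)*(4*a*d)*hd4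 + (1)*(m21-m12)*hd4)
    · exact mul_left_cancel₀ hne (by linear_combination ((1) + (2)*m33 + (2)*m22)*hc11 + ((-2)*m21)*hc12 + ((-2)*m31)*hc13 + ((-1) + (2)*m33)*hc22 + ((-2)*m32 + (-2)*m23)*hc23 + ((-1) + (2)*m22)*hc33 + ((2) + (-2)*m33 + (-2)*m22)*hr11 + ((2)*m12)*hr12 + ((2)*m13)*hr13 + ((2) + (2)*m33 + (2)*m22)*hcof11 + ((-2)*m21)*hcof12 + ((-2)*m31)*hcof13 + (-1)*(1+m11+m22+m33)*hp2 + (-1)*(-4*b*b)*hp2 + (-1)*(4*a*b)*hb4 + (-1)*(m32-m23)*hb4 + (1)*(-4*c*c)*hp2 + (1)*(4*a*c)*hc4 + (1)*(m13-m31)*hc4 + (1)*(-4*d*d)*hp2 + (1)*(4*a*d)*hd4 + (1)*(m21-m12)*hd4)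
    · exact mul_left_cancel₀ hne (by linear_combination ((2) + (2)*m22)*hc12 + ((2)*m23)*hc13 + ((-2)*m21)*hc22 + ((-2)*m21)*hc33 + ((2)*m21)*hr11 + ((2) + (-2)*m11)*hr12 + ((2) + (2)*m33)*hcof12 + ((-2)*m32)*hcof13 + (-2)*(-4*b*c)*hp2 + (-2)*(4*a*b)*hc4 + (-2)*(m13-m31)*hb4 + (2)*(1+m11+m22+m33)*hd4)
    · exact mul_left_cancel₀ hne (by linear_combination ((2)*m32)*hc12 + ((2) + (2)*m33)*hc13 + ((-2)*m31)*hc22 + ((-2)*m31)*hc33 + ((2)*m31)*hr11 + ((2) + (-2)*m11)*hr13 + ((-2)*m23)*hcof12 + ((2) + (2)*m22)*hcof13 + (-2)*(-4*b*d)*hp2 + (-2)*(4*a*b)*hd4 + (-2)*(m21-m12)*hb4 + (-2)*(1+m11+m22+m33)*hc4)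
    · exact mul_left_cancel₀ hne (by linear_combination ((2) + (2)*m22)*hc12 + ((2)*m23)*hc13 + ((-2)*m21)*hc22 + ((-2)*m21)*hc33 + ((2)*m21)*hr11 + ((2) + (-2)*m11)*hr12 + ((2) + (2)*m33)*hcof12 + ((-2)*m32)*hcof13 + (-2)*(-4*b*c)*hp2 + (-2)*(4*a*b)*hc4 + (-2)*(m13-m31)*hb4 + (-2)*(1+m11+m22+m33)*hd4)
    · exact mul_left_cancel₀ hne (by linear_combination ((-1) + (2)*m33 + (-2)*m22)*hc11 + ((2)*m21)*hc12 + ((-2)*m31)*hc13 + ((1) + (2)*m33)*hc22 + ((-2)*m32 + (2)*m23)*hc23 + ((-1) + (-2)*m22)*hc33 + ((-2)*m33 + (2)*m22)*hr11 + ((-2)*m12)*hr12 + ((2)*m13)*hr13 + ((2))*hr22 + ((-2) + (-2)*m33 + (2)*m22)*hcof11 + ((-2)*m21)*hcof12 + ((2)*m31)*hcof13 + (-1)*(1+m11+m22+m33)*hp2 + (1)*(-4*b*b)*hp2 + (1)*(4*a*b)*hb4 + (1)*(m32-m23)*hb4 + (-1)*(-4*c*c)*hp2 + (-1)*(4*a*c)*hc4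 + (-1)*(m13-m31)*hc4 + (1)*(-4*d*d)*hp2 + (1)*(4*a*d)*hd4 + (1)*(m21-m12)*hd4)
    · exact mul_left_cancel₀ hne (by linear_combination ((-2)*m32 + (-2)*m23)*hc11 + ((2)*m31)*hc12 + ((2)*m21)*hc13 + ((-2)*m23)*hc22 + ((2) + (2)*m33 + (2)*m22)*hc23 + ((-2)*m32)*hc33 + ((2)*m32 + (2)*m23)*hr11 + ((-2)*m13)*hr12 + ((-2)*m12)*hr13 + ((2))*hr23 + ((2)*m32 + (2)*m23)*hcof11 + ((-2)*m31)*hcof12 + ((-2)*m21)*hcof13 + (-2)*(-4*c*d)*hp2 + (-2)*(4*a*c)*hd4 + (-2)*(m21-m12)*hc4 + (2)*(1+m11+m22+m33)*hb4)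
    · exact mul_left_cancel₀ hne (by linear_combination ((2)*m32)*hc12 + ((2) + (2)*m33)*hc13 + ((-2)*m31)*hc22 + ((-2)*m31)*hc33 + ((2)*m31)*hr11 + ((2) + (-2)*m11)*hr13 + ((-2)*m23)*hcof12 + ((2) + (2)*m22)*hcof13 + (-2)*(-4*b*d)*hp2 + (-2)*(4*a*b)*hd4 + (-2)*(m21-m12)*hb4 + (2)*(1+m11+m22+m33)*hc4)
    · exact mul_left_cancel₀ hne (by linear_combination ((-2)*m32 + (-2)*m23)*hc11 + ((2)*m31)*hc12 + ((2)*m21)*hc13 + ((-2)*m23)*hc22 + ((2) + (2)*m33 + (2)*m22)*hc23 + ((-2)*m32)*hc33 + ((2)*m32 + (2)*m23)*hr11 + ((-2)*m13)*hr12 + ((-2)*m12)*hr13 + ((2))*hr23 + ((2)*m32 + (2)*m23)*hcof11 + ((-2)*m31)*hcof12 + ((-2)*m21)*hcof13 + (-2)*(-4*c*d)*hp2 + (-2)*(4*a*c)*hd4 + (-2)*(m21-m12)*hc4 + (-2)*(1+m11+m22+m33)*hb4)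
    · exact mul_left_cancel₀ hne (by linear_combination ((1) + (-2)*m33 + (2)*m22)*hc11 + ((-2)*m21)*hc12 + ((2)*m31)*hc13 + ((1) + (-2)*m33)*hc22 + ((2)*m32 + (-2)*m23)*hc23 + ((3) + (2)*m22)*hc33 + ((-2) + (2)*m33 + (-2)*m22)*hr11 + ((2)*m12)*hr12 + ((-2)*m13)*hr13 + ((-2))*hr22 + ((-2) + (2)*m33 + (-2)*m22)*hcof11 + ((2)*m21)*hcof12 + ((-2)*m31)*hcof13 + (-1)*(1+m11+m22+m33)*hp2 + (1)*(-4*b*b)*hp2 + (1)*(4*a*b)*hb4 + (1)*(m32-m23)*hb4 + (1)*(-4*c*c)*hp2 + (1)*(4*a*c)*hc4 + (1)*(m13-m31)*hc4 + (-1)*(-4*d*d)*hp2 + (-1)*(4*a*d)*hd4 + (-1)*(m21-m12)*hd4)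
  · by_cases h1 : 1 ≤ 1+m11-m22-m33
    · have hs : (0:ℝ) < (1+m11-m22-m33) := by linarith
      set b : ℝ := Real.sqrt (1+m11-m22-m33) / 2 with hb_def
      set a : ℝ := (m32-m23) / (4*b) with ha_def
      set c : ℝ := (m12+m21) / (4*b) with hc_def
      set d : ℝ := (m13+m31) / (4*b) with hd_def
      have hp0 : 0 < b := by rw [hb_def]; have := Real.sqrt_pos.mpr hs; linarith
      have hp0' : b ≠ 0 := ne_of_gt hp0
      have hp2 : 4*b^2 = (1+m11-m22-m33) := by
        rw [hb_def, div_pow, Real.sq_sqrt hs.le]; ring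
      have ha4 : 4*b*a = (m32-m23) := by
        rw [ha_def]; field_simp; try ring
      have hc4 : 4*b*c = (m12+m21) := by
        rw [hc_def]; field_simp; try ring
      have hd4 : 4*b*d = (m13+m31) := by
        rw [hd_def]; field_simp; try ring
      have hne : ((4:ℝ)*(1+m11-m22-m33)) ≠ 0 := ne_of_gt (by linarith)
      refine ⟨a, b, c, d, ?_, ?_, ?_, ?_, ?_, ?_, ?_, ?_, ?_, ?_⟩
      · exact mul_left_cancel₀ hne (by linear_combination ((1) + (-2)*m33 + (-2)*m22)*hc11 + ((2)*m21)*hc12 + ((2)*m31)*hc13 + ((1) + (-2)*m33)*hc22 + ((2)*m32 + (2)*m23)*hc23 + ((1) + (-2)*m22)*hc33 + ((2)*m33 + (2)*m22)*hr11 + ((-2)*m12)*hr12 + ((-2)*m13)*hr13 + ((-2) + (-2)*m33 + (-2)*m22)*hcof11 + ((2)*m21)*hcof12 + ((2)*m31)*hcof13 + (1)*(-4*a*a)*hp2 + (1)*(4*b*a)*ha4 + (1)*(m32-m23)*ha4 + (1)*(1+m11-m22-m33)*hp2 + (1)*(-4*c*c)*hp2 + (1)*(4*b*c)*hc4 + (1)*(m12+m21)*hc4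 + (1)*(-4*d*d)*hp2 + (1)*(4*b*d)*hd4 + (1)*(m13+m31)*hd4)
      · exact mul_left_cancel₀ hne (by linear_combination ((1) + (-2)*m33 + (-2)*m22)*hc11 + ((2)*m21)*hc12 + ((2)*m31)*hc13 + ((-1) + (-2)*m33)*hc22 + ((2)*m32 + (2)*m23)*hc23 + ((-1) + (-2)*m22)*hc33 + ((2) + (2)*m33 + (2)*m22)*hr11 + ((-2)*m12)*hr12 + ((-2)*m13)*hr13 + ((2) + (-2)*m33 + (-2)*m22)*hcof11 + ((2)*m21)*hcof12 + ((2)*m31)*hcof13 + (-1)*(-4*a*a)*hp2 + (-1)*(4*b*a)*ha4 + (-1)*(m32-m23)*ha4 + (-1)*(1+m11-m22-m33)*hp2 + (1)*(-4*c*c)*hp2 + (1)*(4*b*c)*hc4 + (1)*(m12+m21)*hc4 + (1)*(-4*d*d)*hp2 + (1)*(4*b*d)*hd4 + (1)*(m13+m31)*hd4)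
      · exact mul_left_cancel₀ hne (by linear_combination ((2) + (-2)*m22)*hc12 + ((-2)*m23)*hc13 + ((2)*m21)*hc22 + ((2)*m21)*hc33 + ((-2)*m21)*hr11 + ((-2) + (2)*m11)*hr12 + ((2) + (-2)*m33)*hcof12 + ((2)*m32)*hcof13 + (-2)*(1+m11-m22-m33)*hc4 + (2)*(-4*a*d)*hp2 + (2)*(4*b*a)*hd4 + (2)*(m13+m31)*ha4)
      · exact mul_left_cancel₀ hne (by linear_combination ((-2)*m32)*hc12 + ((2) + (-2)*m33)*hc13 + ((2)*m31)*hc22 + ((2)*m31)*hc33 + ((-2)*m31)*hr11 + ((-2) + (2)*m11)*hr13 + ((2)*m23)*hcof12 + ((2) + (-2)*m22)*hcof13 + (-2)*(1+m11-m22-m33)*hd4 + (-2)*(-4*a*c)*hp2 + (-2)*(4*b*a)*hc4 + (-2)*(m12+m21)*ha4)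
      · exact mul_left_cancel₀ hne (by linear_combination ((-2) + (2)*m22)*hc12 + ((2)*m23)*hc13 + ((-2)*m21)*hc22 + ((-2)*m21)*hc33 + ((2)*m21)*hr11 + ((2) + (-2)*m11)*hr12 + ((-2) + (2)*m33)*hcof12 + ((-2)*m32)*hcof13 + (-2)*(1+m11-m22-m33)*hc4 + (-2)*(-4*a*d)*hp2 + (-2)*(4*b*a)*hd4 + (-2)*(m13+m31)*ha4)
      · exact mul_left_cancel₀ hne (by linear_combination ((1) + (2)*m33 + (-2)*m22)*hc11 + ((2)*m21)*hc12 + ((-2)*m31)*hc13 + ((-1) + (2)*m33)*hc22 + ((-2)*m32 + (2)*m23)*hc23 + ((1) + (-2)*m22)*hc33 + ((-2)*m33 + (2)*m22)*hr11 + ((-2)*m12)*hr12 + ((2)*m13)*hr13 + ((-2))*hr22 + ((2) + (-2)*m33 + (2)*m22)*hcof11 + ((-2)*m21)*hcof12 + ((2)*m31)*hcof13 + (-1)*(-4*a*a)*hp2 + (-1)*(4*b*a)*ha4 + (-1)*(m32-m23)*ha4 + (1)*(1+m11-m22-m33)*hp2 + (-1)*(-4*c*c)*hp2 + (-1)*(4*b*c)*hc4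 + (-1)*(m12+m21)*hc4 + (1)*(-4*d*d)*hp2 + (1)*(4*b*d)*hd4 + (1)*(m13+m31)*hd4)
      · exact mul_left_cancel₀ hne (by linear_combination ((-2)*m32 + (-2)*m23)*hc11 + ((2)*m31)*hc12 + ((2)*m21)*hc13 + ((-2)*m23)*hc22 + ((-2) + (2)*m33 + (2)*m22)*hc23 + ((-2)*m32)*hc33 + ((2)*m32 + (2)*m23)*hr11 + ((-2)*m13)*hr12 + ((-2)*m12)*hr13 + ((-2))*hr23 + ((2)*m32 + (2)*m23)*hcof11 + ((-2)*m31)*hcof12 + ((-2)*m21)*hcof13 + (-2)*(-4*c*d)*hp2 + (-2)*(4*b*c)*hd4 + (-2)*(m13+m31)*hc4 + (2)*(1+m11-m22-m33)*ha4)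
      · exact mul_left_cancel₀ hne (by linear_combination ((2)*m32)*hc12 + ((-2) + (2)*m33)*hc13 + ((-2)*m31)*hc22 + ((-2)*m31)*hc33 + ((2)*m31)*hr11 + ((2) + (-2)*m11)*hr13 + ((-2)*m23)*hcof12 + ((-2) + (2)*m22)*hcof13 + (-2)*(1+m11-m22-m33)*hd4 + (2)*(-4*a*c)*hp2 + (2)*(4*b*a)*hc4 + (2)*(m12+m21)*ha4)
      · exact mul_left_cancel₀ hne (by linear_combination ((-2)*m32 + (-2)*m23)*hc11 + ((2)*m31)*hc12 + ((2)*m21)*hc13 + ((-2)*m23)*hc22 + ((-2) + (2)*m33 + (2)*m22)*hc23 + ((-2)*m32)*hc33 + ((2)*m32 + (2)*m23)*hr11 + ((-2)*m13)*hr12 + ((-2)*m12)*hr13 + ((-2))*hr23 + ((2)*m32 + (2)*m23)*hcof11 + ((-2)*m31)*hcof12 + ((-2)*m21)*hcof13 + (-2)*(-4*c*d)*hp2 + (-2)*(4*b*c)*hd4 + (-2)*(m13+m31)*hc4 + (-2)*(1+m11-m22-m33)*ha4)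
      · exact mul_left_cancel₀ hne (by linear_combination ((-1) + (-2)*m33 + (2)*m22)*hc11 + ((-2)*m21)*hc12 + ((2)*m31)*hc13 + ((-1) + (-2)*m33)*hc22 + ((2)*m32 + (-2)*m23)*hc23 + ((-3) + (2)*m22)*hc33 + ((2) + (2)*m33 + (-2)*m22)*hr11 + ((2)*m12)*hr12 + ((-2)*m13)*hr13 + ((2))*hr22 + ((2) + (2)*m33 + (-2)*m22)*hcof11 + ((2)*m21)*hcof12 + ((-2)*m31)*hcof13 + (-1)*(-4*a*a)*hp2 + (-1)*(4*b*a)*ha4 + (-1)*(m32-m23)*ha4 + (1)*(1+m11-m22-m33)*hp2 + (1)*(-4*c*c)*hp2 + (1)*(4*b*c)*hc4 + (1)*(m12+m21)*hc4 + (-1)*(-4*d*d)*hp2 + (-1)*(4*b*d)*hd4 + (-1)*(m13+m31)*hd4)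
    · by_cases h2 : 1 ≤ 1-m11+m22-m33
      · have hs : (0:ℝ) < (1-m11+m22-m33) := by linarith
        set c : ℝ := Real.sqrt (1-m11+m22-m33) / 2 with hc_def
        set a : ℝ := (m13-m31) / (4*c) with ha_def
        set b : ℝ := (m12+m21) / (4*c) with hb_def
        set d : ℝ := (m23+m32) / (4*c) with hd_def
        have hp0 : 0 < c := by rw [hc_def]; have := Real.sqrt_pos.mpr hs; linarith
        have hp0' : c ≠ 0 := ne_of_gt hp0
        have hp2 : 4*c^2 = (1-m11+m22-m33) := by
          rw [hc_def, div_pow, Real.sq_sqrt hs.le]; ring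
        have ha4 : 4*c*a = (m13-m31) := by
          rw [ha_def]; field_simp; try ring
        have hb4 : 4*c*b = (m12+m21) := by
          rw [hb_def]; field_simp; try ring
        have hd4 : 4*c*d = (m23+m32) := by
          rw [hd_def]; field_simp; try ring
        have hne : ((4:ℝ)*(1-m11+m22-m33)) ≠ 0 := ne_of_gt (by linarith)
        refine ⟨a, b, c, d, ?_, ?_, ?_, ?_, ?_, ?_, ?_, ?_, ?_, ?_⟩
        · exact mul_left_cancel₀ hne (by linear_combination ((1) + (-2)*m33 + (2)*m22)*hc11 + ((-2)*m21)*hc12 + ((2)*m31)*hc13 + ((1) + (-2)*m33)*hc22 + ((2)*m32 + (-2)*m23)*hc23 + ((1) + (2)*m22)*hc33 + ((2)*m33 + (-2)*m22)*hr11 + ((2)*m12)*hr12 + ((-2)*m13)*hr13 + ((2) + (2)*m33 + (-2)*m22)*hcof11 + ((2)*m21)*hcof12 + ((-2)*m31)*hcof13 + (1)*(-4*a*a)*hp2 + (1)*(4*c*a)*ha4 + (1)*(m13-m31)*ha4 + (1)*(-4*b*b)*hp2 + (1)*(4*c*b)*hb4 + (1)*(m12+m21)*hb4 + (1)*(1-m11+m22-m33)*hp2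 + (1)*(-4*d*d)*hp2 + (1)*(4*c*d)*hd4 + (1)*(m23+m32)*hd4)
        · exact mul_left_cancel₀ hne (by linear_combination ((-1) + (2)*m33 + (-2)*m22)*hc11 + ((2)*m21)*hc12 + ((-2)*m31)*hc13 + ((1) + (2)*m33)*hc22 + ((-2)*m32 + (2)*m23)*hc23 + ((1) + (-2)*m22)*hc33 + ((-2) + (-2)*m33 + (2)*m22)*hr11 + ((-2)*m12)*hr12 + ((2)*m13)*hr13 + ((2) + (-2)*m33 + (2)*m22)*hcof11 + ((-2)*m21)*hcof12 + ((2)*m31)*hcof13 + (-1)*(-4*a*a)*hp2 + (-1)*(4*c*a)*ha4 + (-1)*(m13-m31)*ha4 + (-1)*(-4*b*b)*hp2 + (-1)*(4*c*b)*hb4 + (-1)*(m12+m21)*hb4 + (1)*(1-m11+m22-m33)*hp2 + (1)*(-4*d*d)*hp2 + (1)*(4*c*d)*hd4 + (1)*(m23+m32)*hd4)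
        · exact mul_left_cancel₀ hne (by linear_combination ((-2) + (-2)*m22)*hc12 + ((-2)*m23)*hc13 + ((2)*m21)*hc22 + ((2)*m21)*hc33 + ((-2)*m21)*hr11 + ((2) + (2)*m11)*hr12 + ((2) + (-2)*m33)*hcof12 + ((2)*m32)*hcof13 + (-2)*(1-m11+m22-m33)*hb4 + (2)*(-4*a*d)*hp2 + (2)*(4*c*a)*hd4 + (2)*(m23+m32)*ha4)
        · exact mul_left_cancel₀ hne (by linear_combination ((2)*m32)*hc12 + ((-2) + (2)*m33)*hc13 + ((-2)*m31)*hc22 + ((-2)*m31)*hc33 + ((2)*m31)*hr11 + ((-2) + (-2)*m11)*hr13 + ((-2)*m23)*hcof12 + ((2) + (2)*m22)*hcof13 + (-2)*(-4*b*d)*hp2 + (-2)*(4*c*b)*hd4 + (-2)*(m23+m32)*hb4 + (-2)*(1-m11+m22-m33)*ha4)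
        · exact mul_left_cancel₀ hne (by linear_combination ((2) + (2)*m22)*hc12 + ((2)*m23)*hc13 + ((-2)*m21)*hc22 + ((-2)*m21)*hc33 + ((2)*m21)*hr11 + ((-2) + (-2)*m11)*hr12 + ((-2) + (2)*m33)*hcof12 + ((-2)*m32)*hcof13 + (-2)*(1-m11+m22-m33)*hb4 + (-2)*(-4*a*d)*hp2 + (-2)*(4*c*a)*hd4 + (-2)*(m23+m32)*ha4)
        · exact mul_left_cancel₀ hne (by linear_combination ((-1) + (-2)*m33 + (-2)*m22)*hc11 + ((2)*m21)*hc12 + ((2)*m31)*hc13 + ((1) + (-2)*m33)*hc22 + ((2)*m32 + (2)*m23)*hc23 + ((-1) + (-2)*m22)*hc33 + ((2)*m33 + (2)*m22)*hr11 + ((-2)*m12)*hr12 + ((-2)*m13)*hr13 + ((2))*hr22 + ((2) + (-2)*m33 + (-2)*m22)*hcof11 + ((2)*m21)*hcof12 + ((2)*m31)*hcof13 + (-1)*(-4*a*a)*hp2 + (-1)*(4*c*a)*ha4 + (-1)*(m13-m31)*ha4 + (1)*(-4*b*b)*hp2 + (1)*(4*c*b)*hb4 + (1)*(m12+m21)*hb4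 + (-1)*(1-m11+m22-m33)*hp2 + (1)*(-4*d*d)*hp2 + (1)*(4*c*d)*hd4 + (1)*(m23+m32)*hd4)
        · exact mul_left_cancel₀ hne (by linear_combination ((2)*m32 + (-2)*m23)*hc11 + ((-2)*m31)*hc12 + ((2)*m21)*hc13 + ((-2)*m23)*hc22 + ((2) + (-2)*m33 + (2)*m22)*hc23 + ((2)*m32)*hc33 + ((-2)*m32 + (2)*m23)*hr11 + ((-2)*m13)*hr12 + ((2)*m12)*hr13 + ((-2))*hr23 + ((2)*m32 + (-2)*m23)*hcof11 + ((-2)*m31)*hcof12 + ((2)*m21)*hcof13 + (-2)*(1-m11+m22-m33)*hd4 + (2)*(-4*a*b)*hp2 + (2)*(4*c*a)*hb4 + (2)*(m12+m21)*ha4)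
        · exact mul_left_cancel₀ hne (by linear_combination ((2)*m32)*hc12 + ((-2) + (2)*m33)*hc13 + ((-2)*m31)*hc22 + ((-2)*m31)*hc33 + ((2)*m31)*hr11 + ((-2) + (-2)*m11)*hr13 + ((-2)*m23)*hcof12 + ((2) + (2)*m22)*hcof13 + (-2)*(-4*b*d)*hp2 + (-2)*(4*c*b)*hd4 + (-2)*(m23+m32)*hb4 + (2)*(1-m11+m22-m33)*ha4)
        · exact mul_left_cancel₀ hne (by linear_combination ((-2)*m32 + (2)*m23)*hc11 + ((2)*m31)*hc12 + ((-2)*m21)*hc13 + ((2)*m23)*hc22 + ((-2) + (2)*m33 + (-2)*m22)*hc23 + ((-2)*m32)*hc33 + ((2)*m32 + (-2)*m23)*hr11 + ((2)*m13)*hr12 + ((-2)*m12)*hr13 + ((2))*hr23 + ((-2)*m32 + (2)*m23)*hcof11 + ((2)*m31)*hcof12 + ((-2)*m21)*hcof13 + (-2)*(1-m11+m22-m33)*hd4 + (-2)*(-4*a*b)*hp2 + (-2)*(4*c*a)*hb4 + (-2)*(m12+m21)*ha4)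
        · exact mul_left_cancel₀ hne (by linear_combination ((-1) + (-2)*m33 + (-2)*m22)*hc11 + ((2)*m21)*hc12 + ((2)*m31)*hc13 + ((-1) + (-2)*m33)*hc22 + ((2)*m32 + (2)*m23)*hc23 + ((-3) + (-2)*m22)*hc33 + ((2) + (2)*m33 + (2)*m22)*hr11 + ((-2)*m12)*hr12 + ((-2)*m13)*hr13 + ((2))*hr22 + ((-2) + (-2)*m33 + (-2)*m22)*hcof11 + ((2)*m21)*hcof12 + ((2)*m31)*hcof13 + (-1)*(-4*a*a)*hp2 + (-1)*(4*c*a)*ha4 + (-1)*(m13-m31)*ha4 + (1)*(-4*b*b)*hp2 + (1)*(4*c*b)*hb4 + (1)*(m12+m21)*hb4 + (1)*(1-m11+m22-m33)*hp2 + (-1)*(-4*d*d)*hp2 + (-1)*(4*c*d)*hd4 + (-1)*(m23+m32)*hd4)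
      · have h3 : (1:ℝ) ≤ 1-m11-m22+m33 := by linarith
        have hs : (0:ℝ) < (1-m11-m22+m33) := by linarith
        set d : ℝ := Real.sqrt (1-m11-m22+m33) / 2 with hd_def
        set a : ℝ := (m21-m12) / (4*d) with ha_def
        set b : ℝ := (m13+m31) / (4*d) with hb_def
        set c : ℝ := (m23+m32) / (4*d) with hc_def
        have hp0 : 0 < d := by rw [hd_def]; have := Real.sqrt_pos.mpr hs; linarith
        have hp0' : d ≠ 0 := ne_of_gt hp0
        have hp2 : 4*d^2 = (1-m11-m22+m33) := by
          rw [hd_def, div_pow, Real.sq_sqrt hs.le]; ring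
        have ha4 : 4*d*a = (m21-m12) := by
          rw [ha_def]; field_simp; try ring
        have hb4 : 4*d*b = (m13+m31) := by
          rw [hb_def]; field_simp; try ring
        have hc4 : 4*d*c = (m23+m32) := by
          rw [hc_def]; field_simp; try ring
        have hne : ((4:ℝ)*(1-m11-m22+m33)) ≠ 0 := ne_of_gt (by linarith)
        refine ⟨a, b, c, d, ?_, ?_, ?_, ?_, ?_, ?_, ?_, ?_, ?_, ?_⟩
        · exact mul_left_cancel₀ hne (by linear_combination ((1) + (2)*m33 + (-2)*m22)*hc11 + ((2)*m21)*hc12 + ((-2)*m31)*hc13 + ((1) + (2)*m33)*hc22 + ((-2)*m32 + (2)*m23)*hc23 + ((1) + (-2)*m22)*hc33 + ((-2)*m33 + (2)*m22)*hr11 + ((-2)*m12)*hr12 + ((2)*m13)*hr13 + ((2) + (-2)*m33 + (2)*m22)*hcof11 + ((-2)*m21)*hcof12 + ((2)*m31)*hcof13 + (1)*(-4*a*a)*hp2 + (1)*(4*d*a)*ha4 + (1)*(m21-m12)*ha4 + (1)*(-4*b*b)*hp2 + (1)*(4*d*b)*hb4 + (1)*(m13+m31)*hb4 + (1)*(-4*c*c)*hp2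 + (1)*(4*d*c)*hc4 + (1)*(m23+m32)*hc4 + (1)*(1-m11-m22+m33)*hp2)
        · exact mul_left_cancel₀ hne (by linear_combination ((-1) + (-2)*m33 + (2)*m22)*hc11 + ((-2)*m21)*hc12 + ((2)*m31)*hc13 + ((1) + (-2)*m33)*hc22 + ((2)*m32 + (-2)*m23)*hc23 + ((1) + (2)*m22)*hc33 + ((-2) + (2)*m33 + (-2)*m22)*hr11 + ((2)*m12)*hr12 + ((-2)*m13)*hr13 + ((2) + (2)*m33 + (-2)*m22)*hcof11 + ((2)*m21)*hcof12 + ((-2)*m31)*hcof13 + (-1)*(-4*a*a)*hp2 + (-1)*(4*d*a)*ha4 + (-1)*(m21-m12)*ha4 + (-1)*(-4*b*b)*hp2 + (-1)*(4*d*b)*hb4 + (-1)*(m13+m31)*hb4 + (1)*(-4*c*c)*hp2 + (1)*(4*d*c)*hc4 + (1)*(m23+m32)*hc4 + (1)*(1-m11-m22+m33)*hp2)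
        · exact mul_left_cancel₀ hne (by linear_combination ((-2) + (2)*m22)*hc12 + ((2)*m23)*hc13 + ((-2)*m21)*hc22 + ((-2)*m21)*hc33 + ((2)*m21)*hr11 + ((-2) + (-2)*m11)*hr12 + ((2) + (2)*m33)*hcof12 + ((-2)*m32)*hcof13 + (-2)*(-4*b*c)*hp2 + (-2)*(4*d*b)*hc4 + (-2)*(m23+m32)*hb4 + (2)*(1-m11-m22+m33)*ha4)
        · exact mul_left_cancel₀ hne (by linear_combination ((-2)*m32)*hc12 + ((-2) + (-2)*m33)*hc13 + ((2)*m31)*hc22 + ((2)*m31)*hc33 + ((-2)*m31)*hr11 + ((2) + (2)*m11)*hr13 + ((2)*m23)*hcof12 + ((2) + (-2)*m22)*hcof13 + (-2)*(1-m11-m22+m33)*hb4 + (-2)*(-4*a*c)*hp2 + (-2)*(4*d*a)*hc4 + (-2)*(m23+m32)*ha4)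
        · exact mul_left_cancel₀ hne (by linear_combination ((-2) + (2)*m22)*hc12 + ((2)*m23)*hc13 + ((-2)*m21)*hc22 + ((-2)*m21)*hc33 + ((2)*m21)*hr11 + ((-2) + (-2)*m11)*hr12 + ((2) + (2)*m33)*hcof12 + ((-2)*m32)*hcof13 + (-2)*(-4*b*c)*hp2 + (-2)*(4*d*b)*hc4 + (-2)*(m23+m32)*hb4 + (-2)*(1-m11-m22+m33)*ha4)
        · exact mul_left_cancel₀ hne (by linear_combination ((1) + (-2)*m33 + (-2)*m22)*hc11 + ((2)*m21)*hc12 + ((2)*m31)*hc13 + ((-1) + (-2)*m33)*hc22 + ((2)*m32 + (2)*m23)*hc23 + ((1) + (-2)*m22)*hc33 + ((2)*m33 + (2)*m22)*hr11 + ((-2)*m12)*hr12 + ((-2)*m13)*hr13 + ((-2))*hr22 + ((-2) + (-2)*m33 + (-2)*m22)*hcof11 + ((2)*m21)*hcof12 + ((2)*m31)*hcof13 + (-1)*(-4*a*a)*hp2 + (-1)*(4*d*a)*ha4 + (-1)*(m21-m12)*ha4 + (1)*(-4*b*b)*hp2 + (1)*(4*d*b)*hb4 + (1)*(m13+m31)*hb4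 + (-1)*(-4*c*c)*hp2 + (-1)*(4*d*c)*hc4 + (-1)*(m23+m32)*hc4 + (1)*(1-m11-m22+m33)*hp2)
        · exact mul_left_cancel₀ hne (by linear_combination ((2)*m32 + (-2)*m23)*hc11 + ((-2)*m31)*hc12 + ((2)*m21)*hc13 + ((-2)*m23)*hc22 + ((-2) + (-2)*m33 + (2)*m22)*hc23 + ((2)*m32)*hc33 + ((-2)*m32 + (2)*m23)*hr11 + ((-2)*m13)*hr12 + ((2)*m12)*hr13 + ((2))*hr23 + ((2)*m32 + (-2)*m23)*hcof11 + ((-2)*m31)*hcof12 + ((2)*m21)*hcof13 + (-2)*(1-m11-m22+m33)*hc4 + (2)*(-4*a*b)*hp2 + (2)*(4*d*a)*hb4 + (2)*(m13+m31)*ha4)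
        · exact mul_left_cancel₀ hne (by linear_combination ((2)*m32)*hc12 + ((2) + (2)*m33)*hc13 + ((-2)*m31)*hc22 + ((-2)*m31)*hc33 + ((2)*m31)*hr11 + ((-2) + (-2)*m11)*hr13 + ((-2)*m23)*hcof12 + ((-2) + (2)*m22)*hcof13 + (-2)*(1-m11-m22+m33)*hb4 + (2)*(-4*a*c)*hp2 + (2)*(4*d*a)*hc4 + (2)*(m23+m32)*ha4)
        · exact mul_left_cancel₀ hne (by linear_combination ((-2)*m32 + (2)*m23)*hc11 + ((2)*m31)*hc12 + ((-2)*m21)*hc13 + ((2)*m23)*hc22 + ((2) + (2)*m33 + (-2)*m22)*hc23 + ((-2)*m32)*hc33 + ((2)*m32 + (-2)*m23)*hr11 + ((2)*m13)*hr12 + ((-2)*m12)*hr13 + ((-2))*hr23 + ((-2)*m32 + (2)*m23)*hcof11 + ((2)*m31)*hcof12 + ((-2)*m21)*hcof13 + (-2)*(1-m11-m22+m33)*hc4 + (-2)*(-4*a*b)*hp2 + (-2)*(4*d*a)*hb4 + (-2)*(m13+m31)*ha4)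
        · exact mul_left_cancel₀ hne (by linear_combination ((1) + (-2)*m33 + (-2)*m22)*hc11 + ((2)*m21)*hc12 + ((2)*m31)*hc13 + ((1) + (-2)*m33)*hc22 + ((2)*m32 + (2)*m23)*hc23 + ((3) + (-2)*m22)*hc33 + ((-2) + (2)*m33 + (2)*m22)*hr11 + ((-2)*m12)*hr12 + ((-2)*m13)*hr13 + ((-2))*hr22 + ((2) + (-2)*m33 + (-2)*m22)*hcof11 + ((2)*m21)*hcof12 + ((2)*m31)*hcof13 + (-1)*(-4*a*a)*hp2 + (-1)*(4*d*a)*ha4 + (-1)*(m21-m12)*ha4 + (1)*(-4*b*b)*hp2 + (1)*(4*d*b)*hb4 + (1)*(m13+m31)*hb4 + (1)*(-4*c*c)*hp2 + (1)*(4*d*c)*hc4 + (1)*(m23+m32)*hc4 + (-1)*(1-m11-m22+m33)*hp2)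

set_option maxHeartbeats 1000000 in
theorem so4_decomp (A : Matrix (Fin 4) (Fin 4) ℝ)
    (hA : A.transpose * A = 1) (hdet : A.det = 1) :
    ∃ pa pb pc pd qa qb qc qd : ℝ,
      pa^2+pb^2+pc^2+pd^2 = 1 ∧ qa^2+qb^2+qc^2+qd^2 = 1 ∧
      A = Lm pa pb pc pd * Rm qa qb qc qd := by
  have hp2 : A 0 0 ^2 + A 1 0 ^2 + A 2 0 ^2 + A 3 0 ^2 = 1 := by
    have t := congrFun (congrFun hA 0) 0
    rw [Matrix.mul_apply, Fin.sum_univ_four] at t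
    simp only [Matrix.transpose_apply, Matrix.one_apply_eq] at t
    linear_combination t
  set A' : Matrix (Fin 4) (Fin 4) ℝ := Lm (A 0 0) (-A 1 0) (-A 2 0) (-A 3 0) * A with hA'def
  have hco : A'.transpose * A' = 1 := by
    have e : A'.transpose * A' = A.transpose * ((Lm (A 0 0) (A 1 0) (A 2 0) (A 3 0) * Lm (A 0 0) (-A 1 0) (-A 2 0) (-A 3 0)) * A) := by
      rw [hA'def, Matrix.transpose_mul, Lm_transpose]
      simp [Matrix.mul_assoc]
    rw [e, Lm_mul_star _ _ _ _ hp2, Matrix.one_mul, hA]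
  have hro : A' * A'.transpose = 1 := mul_eq_one_comm.mp hco
  have hdet' : A'.det = 1 := by
    rw [hA'def, Matrix.det_mul, Lm_det, hdet, mul_one]
    nlinarith [hp2]
  have h00 : A' 0 0 = 1 := by
    rw [hA'def, mul_fin_four]
    simp [Lm, Matrix.vecHead, Matrix.vecTail]
    linear_combination hp2
  have h10 : A' 1 0 = 0 := by
    rw [hA'def, mul_fin_four]
    simp [Lm, Matrix.vecHead, Matrix.vecTail]
    try ring
  have h20 : A' 2 0 = 0 := by
    rw [hA'def, mul_fin_four]
    simp [Lm, Matrix.vecHead, Matrix.vecTail]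
    try ring
  have h30 : A' 3 0 = 0 := by
    rw [hA'def, mul_fin_four]
    simp [Lm, Matrix.vecHead, Matrix.vecTail]
    try ring
  have h01 : A' 0 1 = 0 := by
    have t := congrFun (congrFun hco 0) 1
    rw [Matrix.mul_apply, Fin.sum_univ_four] at t
    simp only [Matrix.transpose_apply, h00, h10, h20, h30, Matrix.one_apply_ne (show (0:Fin 4) ≠ 1 from by decide)] at t
    linear_combination t
  have h02 : A' 0 2 = 0 := by
    have t := congrFun (congrFun hco 0) 2
    rw [Matrix.mul_apply, Fin.sum_univ_four] at t
    simp only [Matrix.transpose_apply, h00, h10, h20, h30, Matrix.one_apply_ne (show (0:Fin 4) ≠ 2 from by decide)] at t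
    linear_combination t
  have h03 : A' 0 3 = 0 := by
    have t := congrFun (congrFun hco 0) 3
    rw [Matrix.mul_apply, Fin.sum_univ_four] at t
    simp only [Matrix.transpose_apply, h00, h10, h20, h30, Matrix.one_apply_ne (show (0:Fin 4) ≠ 3 from by decide)] at t
    linear_combination t
  have HC11 : A' 1 1 * A' 1 1 + A' 2 1 * A' 2 1 + A' 3 1 * A' 3 1 = 1 := by
    have t := congrFun (congrFun hco 1) 1
    rw [Matrix.mul_apply, Fin.sum_univ_four] at t
    simp only [Matrix.transpose_apply, h00, h10, h20, h30, h01, h02, h03, Matrix.one_apply_eq] at t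
    linear_combination t
  have HC12 : A' 1 1 * A' 1 2 + A' 2 1 * A' 2 2 + A' 3 1 * A' 3 2 = 0 := by
    have t := congrFun (congrFun hco 1) 2
    rw [Matrix.mul_apply, Fin.sum_univ_four] at t
    simp only [Matrix.transpose_apply, h00, h10, h20, h30, h01, h02, h03, Matrix.one_apply_ne (show (1:Fin 4) ≠ 2 from by decide)] at t
    linear_combination t
  have HC13 : A' 1 1 * A' 1 3 + A' 2 1 * A' 2 3 + A' 3 1 * A' 3 3 = 0 := by
    have t := congrFun (congrFun hco 1) 3
    rw [Matrix.mul_apply, Fin.sum_univ_four] at t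
    simp only [Matrix.transpose_apply, h00, h10, h20, h30, h01, h02, h03, Matrix.one_apply_ne (show (1:Fin 4) ≠ 3 from by decide)] at t
    linear_combination t
  have HC22 : A' 1 2 * A' 1 2 + A' 2 2 * A' 2 2 + A' 3 2 * A' 3 2 = 1 := by
    have t := congrFun (congrFun hco 2) 2
    rw [Matrix.mul_apply, Fin.sum_univ_four] at t
    simp only [Matrix.transpose_apply, h00, h10, h20, h30, h01, h02, h03, Matrix.one_apply_eq] at t
    linear_combination t
  have HC23 : A' 1 2 * A' 1 3 + A' 2 2 * A' 2 3 + A' 3 2 * A' 3 3 = 0 := by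
    have t := congrFun (congrFun hco 2) 3
    rw [Matrix.mul_apply, Fin.sum_univ_four] at t
    simp only [Matrix.transpose_apply, h00, h10, h20, h30, h01, h02, h03, Matrix.one_apply_ne (show (2:Fin 4) ≠ 3 from by decide)] at t
    linear_combination t
  have HC33 : A' 1 3 * A' 1 3 + A' 2 3 * A' 2 3 + A' 3 3 * A' 3 3 = 1 := by
    have t := congrFun (congrFun hco 3) 3
    rw [Matrix.mul_apply, Fin.sum_univ_four] at t
    simp only [Matrix.transpose_apply, h00, h10, h20, h30, h01, h02, h03, Matrix.one_apply_eq] at t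
    linear_combination t
  have HR11 : A' 1 1 * A' 1 1 + A' 1 2 * A' 1 2 + A' 1 3 * A' 1 3 = 1 := by
    have t := congrFun (congrFun hro 1) 1
    rw [Matrix.mul_apply, Fin.sum_univ_four] at t
    simp only [Matrix.transpose_apply, h00, h10, h20, h30, h01, h02, h03, Matrix.one_apply_eq] at t
    linear_combination t
  have HR12 : A' 1 1 * A' 2 1 + A' 1 2 * A' 2 2 + A' 1 3 * A' 2 3 = 0 := by
    have t := congrFun (congrFun hro 1) 2
    rw [Matrix.mul_apply, Fin.sum_univ_four] at t
    simp only [Matrix.transpose_apply, h00, h10, h20, h30, h01, h02, h03, Matrix.one_apply_ne (show (1:Fin 4) ≠ 2 from by decide)] at t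
    linear_combination t
  have HR13 : A' 1 1 * A' 3 1 + A' 1 2 * A' 3 2 + A' 1 3 * A' 3 3 = 0 := by
    have t := congrFun (congrFun hro 1) 3
    rw [Matrix.mul_apply, Fin.sum_univ_four] at t
    simp only [Matrix.transpose_apply, h00, h10, h20, h30, h01, h02, h03, Matrix.one_apply_ne (show (1:Fin 4) ≠ 3 from by decide)] at t
    linear_combination t
  have HR22 : A' 2 1 * A' 2 1 + A' 2 2 * A' 2 2 + A' 2 3 * A' 2 3 = 1 := by
    have t := congrFun (congrFun hro 2) 2
    rw [Matrix.mul_apply, Fin.sum_univ_four] at t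
    simp only [Matrix.transpose_apply, h00, h10, h20, h30, h01, h02, h03, Matrix.one_apply_eq] at t
    linear_combination t
  have HR23 : A' 2 1 * A' 3 1 + A' 2 2 * A' 3 2 + A' 2 3 * A' 3 3 = 0 := by
    have t := congrFun (congrFun hro 2) 3
    rw [Matrix.mul_apply, Fin.sum_univ_four] at t
    simp only [Matrix.transpose_apply, h00, h10, h20, h30, h01, h02, h03, Matrix.one_apply_ne (show (2:Fin 4) ≠ 3 from by decide)] at t
    linear_combination t
  have HR33 : A' 3 1 * A' 3 1 + A' 3 2 * A' 3 2 + A' 3 3 * A' 3 3 = 1 := by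
    have t := congrFun (congrFun hro 3) 3
    rw [Matrix.mul_apply, Fin.sum_univ_four] at t
    simp only [Matrix.transpose_apply, h00, h10, h20, h30, h01, h02, h03, Matrix.one_apply_eq] at t
    linear_combination t
  have HD : A' 1 1 * (A' 2 2 * A' 3 3 - A' 2 3 * A' 3 2) - A' 1 2 * (A' 2 1 * A' 3 3 - A' 2 3 * A' 3 1) + A' 1 3 * (A' 2 1 * A' 3 2 - A' 2 2 * A' 3 1) = 1 := by
    have t := hdet'
    rw [det_fin_four] at t
    simp only [h00, h10, h20, h30, h01, h02, h03] at t
    linear_combination t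
  have hadj : A'.adjugate = A'.transpose := by
    have e1 : A'⁻¹ = A'.transpose := Matrix.inv_eq_left_inv hco
    have e2 : A'⁻¹ = A'.adjugate := Matrix.inv_eq_right_inv (by rw [Matrix.mul_adjugate, hdet', one_smul])
    rw [← e2, e1]
  have T11 : A' 1 1 = ((-1)*A' 0 3*A' 2 2*A' 3 0 + (1)*A' 0 3*A' 2 0*A' 3 2 + (1)*A' 0 2*A' 2 3*A' 3 0 + (-1)*A' 0 2*A' 2 0*A' 3 3 + (-1)*A' 0 0*A' 2 3*A' 3 2 + (1)*A' 0 0*A' 2 2*A' 3 3) := by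
    have e : A' 1 1 = (A'.updateRow 1 (Pi.single 1 1)).det := by
      rw [← Matrix.adjugate_apply, hadj, Matrix.transpose_apply]
    rw [e, det_fin_four]
    norm_num [Matrix.updateRow_apply, Pi.single_apply, Fin.ext_iff, fin3val, fin2val, fin1val]
    try ring
  have HF11 : A' 1 1 = (A' 2 2*A' 3 3 - A' 2 3*A' 3 2) := by
    simp only [h00, h10, h20, h30, h01, h02, h03] at T11
    linear_combination T11
  have T12 : A' 1 2 = ((1)*A' 0 3*A' 2 1*A' 3 0 + (-1)*A' 0 3*A' 2 0*A' 3 1 + (-1)*A' 0 1*A' 2 3*A' 3 0 + (1)*A' 0 1*A' 2 0*A' 3 3 + (1)*A' 0 0*A' 2 3*A' 3 1 + (-1)*A' 0 0*A' 2 1*A' 3 3) := by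
    have e : A' 1 2 = (A'.updateRow 1 (Pi.single 2 1)).det := by
      rw [← Matrix.adjugate_apply, hadj, Matrix.transpose_apply]
    rw [e, det_fin_four]
    norm_num [Matrix.updateRow_apply, Pi.single_apply, Fin.ext_iff, fin3val, fin2val, fin1val]
    try ring
  have HF12 : A' 1 2 = -(A' 2 1*A' 3 3 - A' 2 3*A' 3 1) := by
    simp only [h00, h10, h20, h30, h01, h02, h03] at T12
    linear_combination T12
  have T13 : A' 1 3 = ((-1)*A' 0 2*A' 2 1*A' 3 0 + (1)*A' 0 2*A' 2 0*A' 3 1 + (1)*A' 0 1*A' 2 2*A' 3 0 + (-1)*A' 0 1*A' 2 0*A' 3 2 + (-1)*A' 0 0*A' 2 2*A' 3 1 + (1)*A' 0 0*A' 2 1*A' 3 2) := by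
    have e : A' 1 3 = (A'.updateRow 1 (Pi.single 3 1)).det := by
      rw [← Matrix.adjugate_apply, hadj, Matrix.transpose_apply]
    rw [e, det_fin_four]
    norm_num [Matrix.updateRow_apply, Pi.single_apply, Fin.ext_iff, fin3val, fin2val, fin1val]
    try ring
  have HF13 : A' 1 3 = (A' 2 1*A' 3 2 - A' 2 2*A' 3 1) := by
    simp only [h00, h10, h20, h30, h01, h02, h03] at T13
    linear_combination T13
  have T21 : A' 2 1 = ((1)*A' 0 3*A' 1 2*A' 3 0 + (-1)*A' 0 3*A' 1 0*A' 3 2 + (-1)*A' 0 2*A' 1 3*A' 3 0 + (1)*A' 0 2*A' 1 0*A' 3 3 + (1)*A' 0 0*A' 1 3*A' 3 2 + (-1)*A' 0 0*A' 1 2*A' 3 3) := by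
    have e : A' 2 1 = (A'.updateRow 2 (Pi.single 1 1)).det := by
      rw [← Matrix.adjugate_apply, hadj, Matrix.transpose_apply]
    rw [e, det_fin_four]
    norm_num [Matrix.updateRow_apply, Pi.single_apply, Fin.ext_iff, fin3val, fin2val, fin1val]
    try ring
  have HF21 : A' 2 1 = -(A' 1 2*A' 3 3 - A' 1 3*A' 3 2) := by
    simp only [h00, h10, h20, h30, h01, h02, h03] at T21
    linear_combination T21
  have T22 : A' 2 2 = ((-1)*A' 0 3*A' 1 1*A' 3 0 + (1)*A' 0 3*A' 1 0*A' 3 1 + (1)*A' 0 1*A' 1 3*A' 3 0 + (-1)*A' 0 1*A' 1 0*A' 3 3 + (-1)*A' 0 0*A' 1 3*A' 3 1 + (1)*A' 0 0*A' 1 1*A' 3 3) := by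
    have e : A' 2 2 = (A'.updateRow 2 (Pi.single 2 1)).det := by
      rw [← Matrix.adjugate_apply, hadj, Matrix.transpose_apply]
    rw [e, det_fin_four]
    norm_num [Matrix.updateRow_apply, Pi.single_apply, Fin.ext_iff, fin3val, fin2val, fin1val]
    try ring
  have HF22 : A' 2 2 = (A' 1 1*A' 3 3 - A' 1 3*A' 3 1) := by
    simp only [h00, h10, h20, h30, h01, h02, h03] at T22
    linear_combination T22
  have T23 : A' 2 3 = ((1)*A' 0 2*A' 1 1*A' 3 0 + (-1)*A' 0 2*A' 1 0*A' 3 1 + (-1)*A' 0 1*A' 1 2*A' 3 0 + (1)*A' 0 1*A' 1 0*A' 3 2 + (1)*A' 0 0*A' 1 2*A' 3 1 + (-1)*A' 0 0*A' 1 1*A' 3 2) := by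
    have e : A' 2 3 = (A'.updateRow 2 (Pi.single 3 1)).det := by
      rw [← Matrix.adjugate_apply, hadj, Matrix.transpose_apply]
    rw [e, det_fin_four]
    norm_num [Matrix.updateRow_apply, Pi.single_apply, Fin.ext_iff, fin3val, fin2val, fin1val]
    try ring
  have HF23 : A' 2 3 = -(A' 1 1*A' 3 2 - A' 1 2*A' 3 1) := by
    simp only [h00, h10, h20, h30, h01, h02, h03] at T23
    linear_combination T23
  have T31 : A' 3 1 = ((-1)*A' 0 3*A' 1 2*A' 2 0 + (1)*A' 0 3*A' 1 0*A' 2 2 + (1)*A' 0 2*A' 1 3*A' 2 0 + (-1)*A' 0 2*A' 1 0*A' 2 3 + (-1)*A' 0 0*A' 1 3*A' 2 2 + (1)*A' 0 0*A' 1 2*A' 2 3) := by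
    have e : A' 3 1 = (A'.updateRow 3 (Pi.single 1 1)).det := by
      rw [← Matrix.adjugate_apply, hadj, Matrix.transpose_apply]
    rw [e, det_fin_four]
    norm_num [Matrix.updateRow_apply, Pi.single_apply, Fin.ext_iff, fin3val, fin2val, fin1val]
    try ring
  have HF31 : A' 3 1 = (A' 1 2*A' 2 3 - A' 1 3*A' 2 2) := by
    simp only [h00, h10, h20, h30, h01, h02, h03] at T31
    linear_combination T31
  have T32 : A' 3 2 = ((1)*A' 0 3*A' 1 1*A' 2 0 + (-1)*A' 0 3*A' 1 0*A' 2 1 + (-1)*A' 0 1*A' 1 3*A' 2 0 + (1)*A' 0 1*A' 1 0*A' 2 3 + (1)*A' 0 0*A' 1 3*A' 2 1 + (-1)*A' 0 0*A' 1 1*A' 2 3) := by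
    have e : A' 3 2 = (A'.updateRow 3 (Pi.single 2 1)).det := by
      rw [← Matrix.adjugate_apply, hadj, Matrix.transpose_apply]
    rw [e, det_fin_four]
    norm_num [Matrix.updateRow_apply, Pi.single_apply, Fin.ext_iff, fin3val, fin2val, fin1val]
    try ring
  have HF32 : A' 3 2 = -(A' 1 1*A' 2 3 - A' 1 3*A' 2 1) := by
    simp only [h00, h10, h20, h30, h01, h02, h03] at T32
    linear_combination T32
  have T33 : A' 3 3 = ((-1)*A' 0 2*A' 1 1*A' 2 0 + (1)*A' 0 2*A' 1 0*A' 2 1 + (1)*A' 0 1*A' 1 2*A' 2 0 + (-1)*A' 0 1*A' 1 0*A' 2 2 + (-1)*A' 0 0*A' 1 2*A' 2 1 + (1)*A' 0 0*A' 1 1*A' 2 2) := by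
    have e : A' 3 3 = (A'.updateRow 3 (Pi.single 3 1)).det := by
      rw [← Matrix.adjugate_apply, hadj, Matrix.transpose_apply]
    rw [e, det_fin_four]
    norm_num [Matrix.updateRow_apply, Pi.single_apply, Fin.ext_iff, fin3val, fin2val, fin1val]
    try ring
  have HF33 : A' 3 3 = (A' 1 1*A' 2 2 - A' 1 2*A' 2 1) := by
    simp only [h00, h10, h20, h30, h01, h02, h03] at T33
    linear_combination T33
  obtain ⟨a, b, c, d, hn, e11, e12, e13, e21, e22, e23, e31, e32, e33⟩ := so3_lift (A' 1 1) (A' 1 2) (A' 1 3) (A' 2 1) (A' 2 2) (A' 2 3) (A' 3 1) (A' 3 2) (A' 3 3) HC11 HC12 HC13 HC22 HC23 HC33 HR11 HR12 HR13 HR22 HR23 HR33 HD HF11 HF12 HF13 HF21 HF22 HF23 HF31 HF32 HF33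
  have hA'C : A' = Cm a b c d := by
    ext i j
    fin_cases i <;> fin_cases j <;> simp [Cm, Matrix.vecHead, Matrix.vecTail]
    · linear_combination h00
    · linear_combination h01
    · linear_combination h02
    · linear_combination h03
    · linear_combination h10
    · linear_combination e11
    · linear_combination e12
    · linear_combination e13
    · linear_combination h20
    · linear_combination e21
    · linear_combination e22
    · linear_combination e23
    · linear_combination h30
    · linear_combination e31
    · linear_combination e32
    · linear_combination e33
  have hfin : Lm (A 0 0) (A 1 0) (A 2 0) (A 3 0) * A' = A := by
    rw [hA'def, ← Matrix.mul_assoc, Lm_mul_star _ _ _ _ hp2, Matrix.one_mul]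
  refine ⟨A 0 0 * a - A 1 0 * b - A 2 0 * c - A 3 0 * d,
          A 0 0 * b + A 1 0 * a + A 2 0 * d - A 3 0 * c,
          A 0 0 * c - A 1 0 * d + A 2 0 * a + A 3 0 * b,
          A 0 0 * d + A 1 0 * c - A 2 0 * b + A 3 0 * a,
          a, -b, -c, -d, ?_, ?_, ?_⟩
  · linear_combination (A 0 0 ^2 + A 1 0 ^2 + A 2 0 ^2 + A 3 0 ^2) * hn + hp2
  · linear_combination hn
  · conv_lhs => rw [← hfin, hA'C, ← Lm_mul_Rm_conj a b c d hn]
    rw [← Matrix.mul_assoc, Lm_mul]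

theorem Lm_star_mul' (a b c d : ℝ) (h : a^2+b^2+c^2+d^2 = 1) :
    Lm a (-b) (-c) (-d) * Lm a b c d = 1 := by
  rw [← Lm_transpose, Lm_unit a b c d h]

theorem Lm_congr {a b c d a' b' c' d' : ℝ} (h1 : a = a') (h2 : b = b') (h3 : c = c')
    (h4 : d = d') : Lm a b c d = Lm a' b' c' d' := by rw [h1, h2, h3, h4]

theorem Rm_congr {a b c d a' b' c' d' : ℝ} (h1 : a = a') (h2 : b = b') (h3 : c = c')
    (h4 : d = d') : Rm a b c d = Rm a' b' c' d' := by rw [h1, h2, h3, h4]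

theorem LR_assoc (a b c d e f g h a' b' c' d' e' f' g' h' : ℝ) :
    (Lm a b c d * Rm e f g h) * (Lm a' b' c' d' * Rm e' f' g' h') =
    (Lm a b c d * Lm a' b' c' d') * (Rm e f g h * Rm e' f' g' h') := by
  rw [mul_assoc (Lm a b c d) (Rm e f g h), ← mul_assoc (Rm e f g h) (Lm a' b' c' d'),
      ← Lm_Rm_comm, mul_assoc (Lm a' b' c' d') (Rm e f g h),
      ← mul_assoc (Lm a b c d) (Lm a' b' c' d')]

theorem sandwich (u1 u2 u3 w1 w2 w3 pa pb pc pd qa qb qc qd : ℝ)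
    (hu : u1^2+u2^2+u3^2 = 1) (hw : w1^2+w2^2+w3^2 = 1)
    (hup : u1*pb+u2*pc+u3*pd = 0) (hwq : w1*qb+w2*qc+w3*qd = 0) :
    (Lm 0 u1 u2 u3 * Rm 0 w1 w2 w3) * (Lm pa pb pc pd * Rm qa qb qc qd) *
      (Lm 0 u1 u2 u3 * Rm 0 w1 w2 w3) = Lm (-pa) pb pc pd * Rm (-qa) qb qc qd := by
  rw [LR_assoc, Lm_mul, Rm_mul, LR_assoc, Lm_mul, Rm_mul]
  exact congrArg₂ (· * ·)
    (Lm_congr (by linear_combination (-pa)*hu) (by linear_combination pb*hu + (-2)*u1*hup)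
      (by linear_combination pc*hu + (-2)*u2*hup) (by linear_combination pd*hu + (-2)*u3*hup))
    (Rm_congr (by linear_combination (-qa)*hw) (by linear_combination qb*hw + (-2)*w1*hwq)
      (by linear_combination qc*hw + (-2)*w2*hwq) (by linear_combination qd*hw + (-2)*w3*hwq))

theorem LR_sq (u1 u2 u3 w1 w2 w3 : ℝ) (hu : u1^2+u2^2+u3^2 = 1) (hw : w1^2+w2^2+w3^2 = 1) :
    (Lm 0 u1 u2 u3 * Rm 0 w1 w2 w3) * (Lm 0 u1 u2 u3 * Rm 0 w1 w2 w3) = 1 := by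
  rw [LR_assoc, Lm_mul, Rm_mul]
  calc _ = Lm (-1) 0 0 0 * Rm (-1) 0 0 0 :=
        congrArg₂ (· * ·)
          (Lm_congr (by linear_combination -hu) (by linear_combination)
            (by linear_combination) (by linear_combination))
          (Rm_congr (by linear_combination -hw) (by linear_combination)
            (by linear_combination) (by linear_combination))
    _ = 1 := by rw [Lm_neg_one, Rm_neg_one, neg_one_mul, neg_neg]

theorem LR_orth (u1 u2 u3 w1 w2 w3 : ℝ) (hu : u1^2+u2^2+u3^2 = 1) (hw : w1^2+w2^2+w3^2 = 1) :
    (Lm 0 u1 u2 u3 * Rm 0 w1 w2 w3).transpose * (Lm 0 u1 u2 u3 * Rm 0 w1 w2 w3) = 1 := by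
  rw [Matrix.transpose_mul, Rm_transpose, Lm_transpose, ← Lm_Rm_comm, LR_assoc, Lm_mul, Rm_mul]
  calc _ = Lm 1 0 0 0 * Rm 1 0 0 0 :=
        congrArg₂ (· * ·)
          (Lm_congr (by linear_combination hu) (by linear_combination)
            (by linear_combination) (by linear_combination))
          (Rm_congr (by linear_combination hw) (by linear_combination)
            (by linear_combination) (by linear_combination))
    _ = 1 := by rw [Lm_one, Rm_one, one_mul]

theorem LR_det (u1 u2 u3 w1 w2 w3 : ℝ) (hu : u1^2+u2^2+u3^2 = 1) (hw : w1^2+w2^2+w3^2 = 1) :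
    (Lm 0 u1 u2 u3 * Rm 0 w1 w2 w3).det = 1 := by
  rw [Matrix.det_mul, Lm_det, Rm_det]
  linear_combination ((0^2+u1^2+u2^2+u3^2)^2*((0^2+w1^2+w2^2+w3^2)+1))*hw +
    ((0^2+u1^2+u2^2+u3^2)+1)*hu

theorem LR_inv (pa pb pc pd qa qb qc qd : ℝ) (hp : pa^2+pb^2+pc^2+pd^2 = 1)
    (hq : qa^2+qb^2+qc^2+qd^2 = 1) :
    (Lm pa pb pc pd * Rm qa qb qc qd) * (Lm (-pa) pb pc pd * Rm (-qa) qb qc qd) = 1 := by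
  rw [LR_assoc, Lm_mul, Rm_mul]
  calc _ = Lm (-1) 0 0 0 * Rm (-1) 0 0 0 :=
        congrArg₂ (· * ·)
          (Lm_congr (by linear_combination -hp) (by linear_combination)
            (by linear_combination) (by linear_combination))
          (Rm_congr (by linear_combination -hq) (by linear_combination)
            (by linear_combination) (by linear_combination))
    _ = 1 := by rw [Lm_neg_one, Rm_neg_one, neg_one_mul, neg_neg]

theorem stmt_11 (A B : Matrix (Fin 4) (Fin 4) ℝ)
    (hA : A.transpose * A = 1) (hAdet : A.det = 1)
    (hB : B.transpose * B = 1) (hBdet : B.det = 1) :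
    ∃ C : Matrix (Fin 4) (Fin 4) ℝ,
      C.transpose * C = 1 ∧ C.det = 1 ∧ C * C = 1 ∧
      C * A * C⁻¹ = A⁻¹ ∧ C * B * C⁻¹ = B⁻¹ := by
  obtain ⟨pa,pb,pc,pd,qa,qb,qc,qd,hp,hq,hAe⟩ := so4_decomp A hA hAdet
  obtain ⟨ra,rb,rc,rd,sa,sb,sc,sd,hr,hs,hBe⟩ := so4_decomp B hB hBdet
  obtain ⟨u1,u2,u3,hu,hup,hur⟩ := perp3 pb pc pd rb rc rd
  obtain ⟨w1,w2,w3,hw,hwq,hws⟩ := perp3 qb qc qd sb sc sd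
  refine ⟨Lm 0 u1 u2 u3 * Rm 0 w1 w2 w3, LR_orth u1 u2 u3 w1 w2 w3 hu hw,
    LR_det u1 u2 u3 w1 w2 w3 hu hw, LR_sq u1 u2 u3 w1 w2 w3 hu hw, ?_, ?_⟩
  · rw [Matrix.inv_eq_right_inv (LR_sq u1 u2 u3 w1 w2 w3 hu hw)]
    rw [hAe, sandwich u1 u2 u3 w1 w2 w3 pa pb pc pd qa qb qc qd hu hw hup hwq]
    exact (Matrix.inv_eq_right_inv (LR_inv pa pb pc pd qa qb qc qd hp hq)).symm
  · rw [Matrix.inv_eq_right_inv (LR_sq u1 u2 u3 w1 w2 w3 hu hw)]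
    rw [hBe, sandwich u1 u2 u3 w1 w2 w3 ra rb rc rd sa sb sc sd hu hw hur hws]
    exact (Matrix.inv_eq_right_inv (LR_inv ra rb rc rd sa sb sc sd hr hs)).symm
end
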